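/- With c² = (1 + cos ψ)/(2·cos(ψ/4) − cos ψ + 1) and R² = (1 + cos ψ)/(2·cos(ψ/4) + cos ψ − 1), the quantity 2 + c² − R² is strictly positive for ψ ∈ (0, 2π/3), equals 0 at ψ = 2π/3, and is strictly negative for ψ ∈ (2π/3, ω), where ω is the smallest positive root of 2·cos(ψ/4) + cos ψ − 1 = 0. -/

import Mathlib

private lemma cos_quarter (ψ : ℝ) :
    Real.cos ψ = 8*(Real.cos (ψ/4))^4 - 8*(Real.cos (ψ/4))^2 + 1 := by
  have h : ψ = 2*(2*(ψ/4)) := by ring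
  rw [h, Real.cos_two_mul, Real.cos_two_mul]
  ring

private lemma key (ψ : ℝ) (h1 : 2*Real.cos (ψ/4) - Real.cos ψ + 1 ≠ 0)
    (h2 : 2*Real.cos (ψ/4) + Real.cos ψ - 1 ≠ 0) :
    2 + (1+Real.cos ψ)/(2*Real.cos (ψ/4) - Real.cos ψ + 1)
      - (1+Real.cos ψ)/(2*Real.cos (ψ/4) + Real.cos ψ - 1)
    = 8*(Real.cos (ψ/4))^2*(4*(Real.cos (ψ/4))^2-3)
      / ((2*Real.cos (ψ/4) - Real.cos ψ + 1)*(2*Real.cos (ψ/4) + Real.cos ψ - 1)) := by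
  rw [cos_quarter ψ] at h1 h2 ⊢
  rw [add_div' _ _ _ h1, div_sub_div _ _ h1 h2]
  congr 1
  ring

private lemma sqrt3_gt : (3:ℝ)/2 < Real.sqrt 3 := by
  nlinarith [Real.sq_sqrt (by norm_num : (3:ℝ) ≥ 0), Real.sqrt_nonneg 3]

/-- The quantity 2 + c² − R², with c² = (1+cos ψ)/(2cos(ψ/4) − cos ψ + 1) and
R² = (1+cos ψ)/(2cos(ψ/4) + cos ψ − 1), is positive for ψ ∈ (0, 2π/3),
vanishes at ψ = 2π/3, and is negative for ψ ∈ (2π/3, ω), where ω is the smallest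
positive root of 2cos(ψ/4) + cos ψ − 1 = 0. -/
theorem stmt6 (ω : ℝ)
    (hω : IsLeast {ψ : ℝ | 0 < ψ ∧ 2 * Real.cos (ψ / 4) + Real.cos ψ - 1 = 0} ω) :
    (∀ ψ ∈ Set.Ioo 0 (2 * Real.pi / 3),
      0 < 2 + (1 + Real.cos ψ) / (2 * Real.cos (ψ / 4) - Real.cos ψ + 1) -
            (1 + Real.cos ψ) / (2 * Real.cos (ψ / 4) + Real.cos ψ - 1)) ∧
    (2 + (1 + Real.cos (2 * Real.pi / 3)) /
          (2 * Real.cos (2 * Real.pi / 3 / 4) - Real.cos (2 * Real.pi / 3) + 1) -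
        (1 + Real.cos (2 * Real.pi / 3)) /
          (2 * Real.cos (2 * Real.pi / 3 / 4) + Real.cos (2 * Real.pi / 3) - 1) = 0) ∧
    (∀ ψ ∈ Set.Ioo (2 * Real.pi / 3) ω,
      2 + (1 + Real.cos ψ) / (2 * Real.cos (ψ / 4) - Real.cos ψ + 1) -
          (1 + Real.cos ψ) / (2 * Real.cos (ψ / 4) + Real.cos ψ - 1) < 0) := by
  have pi_pos := Real.pi_pos
  -- ω ≤ 2π
  have hω2pi : ω ≤ 2 * Real.pi := by
    apply hω.2
    constructor
    · positivity
    · have h4 : (2 * Real.pi) / 4 = Real.pi / 2 := by ring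
      rw [h4, Real.cos_pi_div_two, Real.cos_two_pi]; ring
  -- D2 is positive on (0, ω)
  have hD2pos : ∀ ψ : ℝ, 0 < ψ → ψ < ω →
      0 < 2 * Real.cos (ψ / 4) + Real.cos ψ - 1 := by
    intro ψ h0 hψ
    by_contra h
    push_neg at h
    set f : ℝ → ℝ := fun t => 2 * Real.cos (t / 4) + Real.cos t - 1 with hf
    have hcont : ContinuousOn f (Set.Icc 0 ψ) := by
      apply Continuous.continuousOn; fun_prop
    have hf0 : f 0 = 2 := by simp [hf]
    have h0mem : (0:ℝ) ∈ Set.Icc (f ψ) (f 0) := by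
      constructor
      · exact h
      · rw [hf0]; norm_num
    obtain ⟨c, hc, hfc⟩ := intermediate_value_Icc' (le_of_lt h0) hcont h0mem
    have hcne : c ≠ 0 := by
      intro hc0; rw [hc0, hf0] at hfc; norm_num at hfc
    have hcpos : 0 < c := lt_of_le_of_ne hc.1 (Ne.symm hcne)
    have : ω ≤ c := hω.2 ⟨hcpos, hfc⟩
    linarith [hc.2]
  -- 2π/3 < ω
  have hω23 : 2 * Real.pi / 3 < ω := by
    by_contra h
    push_neg at h
    obtain ⟨hωpos, hωeq⟩ := hω.1
    have hu : Real.cos (Real.pi / 6) ≤ Real.cos (ω / 4) := by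
      apply Real.cos_le_cos_of_nonneg_of_le_pi (by positivity) (by linarith)
      linarith
    have hv : Real.cos (2 * Real.pi / 3) ≤ Real.cos ω := by
      apply Real.cos_le_cos_of_nonneg_of_le_pi (by positivity) (by linarith)
      linarith
    have h6 : Real.cos (Real.pi / 6) = Real.sqrt 3 / 2 := Real.cos_pi_div_six
    have h23 : Real.cos (2 * Real.pi / 3) = -(1/2) := by
      rw [show (2 * Real.pi / 3 : ℝ) = Real.pi - Real.pi / 3 by ring,
        Real.cos_pi_sub, Real.cos_pi_div_three]
    rw [h6] at hu
    rw [h23] at hv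
    have := sqrt3_gt
    linarith
  -- D1 positive on (0, ω)
  have hD1pos : ∀ ψ : ℝ, 0 < ψ → ψ < ω →
      0 < 2 * Real.cos (ψ / 4) - Real.cos ψ + 1 := by
    intro ψ h0 hψ
    have hupos : 0 < Real.cos (ψ / 4) := by
      apply Real.cos_pos_of_mem_Ioo
      constructor <;> [linarith; linarith]
    have := Real.cos_le_one ψ
    linarith
  refine ⟨?_, ?_, ?_⟩
  · -- positive part
    intro ψ ⟨h0, hψ⟩
    have hψω : ψ < ω := lt_trans hψ hω23
    have hD1 := hD1pos ψ h0 hψω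
    have hD2 := hD2pos ψ h0 hψω
    rw [key ψ (ne_of_gt hD1) (ne_of_gt hD2)]
    apply div_pos _ (mul_pos hD1 hD2)
    have hu : Real.sqrt 3 / 2 < Real.cos (ψ / 4) := by
      rw [← Real.cos_pi_div_six]
      apply Real.cos_lt_cos_of_nonneg_of_le_pi (by positivity) (by linarith)
      linarith
    have hsq : (Real.sqrt 3 / 2)^2 < Real.cos (ψ / 4)^2 :=
      pow_lt_pow_left₀ hu (by positivity) (by norm_num)
    have hs := Real.sq_sqrt (by norm_num : (3:ℝ) ≥ 0)
    nlinarith [hsq, hs, sq_nonneg (Real.cos (ψ / 4))]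
  · -- zero part
    have h14 : (2 * Real.pi / 3) / 4 = Real.pi / 6 := by ring
    have h6 : Real.cos (Real.pi / 6) = Real.sqrt 3 / 2 := Real.cos_pi_div_six
    have h23 : Real.cos (2 * Real.pi / 3) = -(1/2) := by
      rw [show (2 * Real.pi / 3 : ℝ) = Real.pi - Real.pi / 3 by ring,
        Real.cos_pi_sub, Real.cos_pi_div_three]
    have hs := Real.sq_sqrt (by norm_num : (3:ℝ) ≥ 0)
    have h3 := sqrt3_gt
    have hD1 : 2 * Real.cos ((2 * Real.pi / 3) / 4) - Real.cos (2 * Real.pi / 3) + 1 ≠ 0 := by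
      rw [h14, h6, h23]; nlinarith
    have hD2 : 2 * Real.cos ((2 * Real.pi / 3) / 4) + Real.cos (2 * Real.pi / 3) - 1 ≠ 0 := by
      rw [h14, h6, h23]; nlinarith
    have := key (2 * Real.pi / 3) hD1 hD2
    rw [this, h14, h6]
    rw [show 8 * (Real.sqrt 3 / 2)^2 * (4 * (Real.sqrt 3 / 2)^2 - 3) = 0 by nlinarith]
    exact zero_div _
  · -- negative part
    intro ψ ⟨hψ, hψω⟩
    have h0 : 0 < ψ := by linarith
    have hD1 := hD1pos ψ h0 hψω
    have hD2 := hD2pos ψ h0 hψω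
    rw [key ψ (ne_of_gt hD1) (ne_of_gt hD2)]
    apply div_neg_of_neg_of_pos _ (mul_pos hD1 hD2)
    have hupos : 0 < Real.cos (ψ / 4) := by
      apply Real.cos_pos_of_mem_Ioo
      constructor <;> [linarith; linarith]
    have hu : Real.cos (ψ / 4) < Real.sqrt 3 / 2 := by
      rw [← Real.cos_pi_div_six]
      apply Real.cos_lt_cos_of_nonneg_of_le_pi (by positivity) (by linarith) (by linarith)
    have hsq : Real.cos (ψ / 4)^2 < (Real.sqrt 3 / 2)^2 :=
      pow_lt_pow_left₀ hu (le_of_lt hupos) (by norm_num)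
    have hs := Real.sq_sqrt (by norm_num : (3:ℝ) ≥ 0)
    nlinarith [hsq, hs, mul_pos hupos hupos]
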